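/- For θ ∈ [0,π], let e_θ denote the Born-rule empirical model of the state |diag;θ,π/4⟩ = cos(θ/2)·|0⟩⊗|0⟩ + e^{iπ/4} sin(θ/2)·|1⟩⊗|1⟩ in the two-party Bell scenario in which both Alice's and Bob's two measurements are given by the Pauli bases B_x = {(|0⟩+|1⟩)/√2, (|0⟩−|1⟩)/√2} and B_y = {(|0⟩+i|1⟩)/√2, (|0⟩−i|1⟩)/√2}, and let h(p) = −p·log₂ p − (1−p)·log₂(1−p) be the binary entropy (so S_ent(|diag;θ,π/4⟩) = h(cos²(θ/2))). Then the contextual fraction grows monotonically with the entanglement entropy: for all θ₁, θ₂ ∈ [0,π], if h(cos²(θ₁/2)) > h(cos²(θ₂/2)) then CF(e_{θ₁}) ≥ CF(e_{θ₂}). -/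

import Mathlib

open scoped ComplexConjugate

/-- Standard Hermitian inner product on `ℂ²` (conjugate-linear in the first slot). -/
noncomputable def ip2 (u v : Fin 2 → ℂ) : ℂ := ∑ i, conj (u i) * v i

/-- Tensor product `u ⊗ v ∈ ℂ² ⊗ ℂ²`, as a function on `Fin 2 × Fin 2`. -/
noncomputable def tens (u v : Fin 2 → ℂ) : Fin 2 × Fin 2 → ℂ := fun p => u p.1 * v p.2

/-- Standard Hermitian inner product on `ℂ² ⊗ ℂ²` (conjugate-linear in the
first slot). -/
noncomputable def ip4 (u v : Fin 2 × Fin 2 → ℂ) : ℂ := ∑ p, conj (u p) * v p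

/-- Bloch vector `|θ,φ⟩ = cos(θ/2)|0⟩ + e^{iφ} sin(θ/2)|1⟩`. -/
noncomputable def bloch (θ φ : ℝ) : Fin 2 → ℂ :=
  ![(Real.cos (θ / 2) : ℂ), Complex.exp (φ * Complex.I) * (Real.sin (θ / 2) : ℂ)]

/-- The orthonormal basis `B(θ,φ) = {|θ,φ⟩, |π−θ,π+φ⟩}` of `ℂ²`, indexed by the
outcome. -/
noncomputable def Bbasis (θ φ : ℝ) : Fin 2 → Fin 2 → ℂ :=
  ![bloch θ φ, bloch (Real.pi - θ) (Real.pi + φ)]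

/-- The Born-rule empirical model of the state `ψ ∈ ℂ² ⊗ ℂ²` when Alice's
measurement `a_{i+1}` is given by the orthonormal basis `A i` and Bob's
measurement `b_{j+1}` by the orthonormal basis `B j`:
`e_{{a_i,b_j}}(s,t) = |⟨α_{i,s} ⊗ β_{j,t}, ψ⟩|²`. -/
noncomputable def born (A B : Fin 2 → Fin 2 → Fin 2 → ℂ) (ψ : Fin 2 × Fin 2 → ℂ) :
    Fin 2 → Fin 2 → Fin 2 → Fin 2 → ℝ := fun i j s t =>
  ‖ip4 (tens (A i s) (B j t)) ψ‖ ^ 2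

/-- An empirical model on the two-party Bell scenario: for each context
`{a_{i+1}, b_{j+1}}` a probability distribution on joint outcomes `(s, t)`. -/
def IsModel (e : Fin 2 → Fin 2 → Fin 2 → Fin 2 → ℝ) : Prop :=
  (∀ i j s t, 0 ≤ e i j s t) ∧ ∀ i j, (∑ s, ∑ t, e i j s t) = 1

/-- Noncontextuality: a global probability distribution on assignments
`g : {a₁,a₂,b₁,b₂} → {0,1}` (with `X` encoded as `Fin 2 ⊕ Fin 2`, `inl i = a_{i+1}`,
`inr j = b_{j+1}`) marginalises to every context. -/
def Noncontextual (e : Fin 2 → Fin 2 → Fin 2 → Fin 2 → ℝ) : Prop :=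
  ∃ d : (Fin 2 ⊕ Fin 2 → Fin 2) → ℝ,
    (∀ g, 0 ≤ d g) ∧ (∑ g, d g) = 1 ∧
    ∀ i j s t, (∑ g ∈ Finset.univ.filter
        (fun g : Fin 2 ⊕ Fin 2 → Fin 2 => g (.inl i) = s ∧ g (.inr j) = t), d g)
      = e i j s t

/-- The noncontextual fraction of an empirical model. -/
noncomputable def NCF (e : Fin 2 → Fin 2 → Fin 2 → Fin 2 → ℝ) : ℝ :=
  sSup {l : ℝ | 0 ≤ l ∧ l ≤ 1 ∧
    ∃ eNC e' : Fin 2 → Fin 2 → Fin 2 → Fin 2 → ℝ,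
      IsModel eNC ∧ Noncontextual eNC ∧ IsModel e' ∧
      ∀ i j s t, e i j s t = l * eNC i j s t + (1 - l) * e' i j s t}

/-- The contextual fraction of an empirical model. -/
noncomputable def CF (e : Fin 2 → Fin 2 → Fin 2 → Fin 2 → ℝ) : ℝ := 1 - NCF e

/-- Diagonal two-qubit state `|diag;θ,φ⟩ = cos(θ/2)|00⟩ + e^{iφ} sin(θ/2)|11⟩`. -/
noncomputable def diagState (θ φ : ℝ) : Fin 2 × Fin 2 → ℂ := fun p =>
  if p = (0, 0) then (Real.cos (θ / 2) : ℂ)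
  else if p = (1, 1) then Complex.exp (φ * Complex.I) * (Real.sin (θ / 2) : ℂ)
  else 0

/-- The Pauli `x` basis `{(|0⟩+|1⟩)/√2, (|0⟩−|1⟩)/√2}`. -/
noncomputable def Bx : Fin 2 → Fin 2 → ℂ :=
  ![![((Real.sqrt 2)⁻¹ : ℂ), ((Real.sqrt 2)⁻¹ : ℂ)],
    ![((Real.sqrt 2)⁻¹ : ℂ), -((Real.sqrt 2)⁻¹ : ℂ)]]

/-- The Pauli `y` basis `{(|0⟩+i|1⟩)/√2, (|0⟩−i|1⟩)/√2}`. -/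
noncomputable def By : Fin 2 → Fin 2 → ℂ :=
  ![![((Real.sqrt 2)⁻¹ : ℂ), Complex.I * ((Real.sqrt 2)⁻¹ : ℂ)],
    ![((Real.sqrt 2)⁻¹ : ℂ), -(Complex.I * ((Real.sqrt 2)⁻¹ : ℂ))]]

/-- Alice's (= Bob's) measurements in the scenario `S(B_x, B_y)`. -/
noncomputable def pauliMeas : Fin 2 → Fin 2 → Fin 2 → ℂ := ![Bx, By]

/-- Binary entropy with `log₂ x = Real.log x / Real.log 2` (so that
`S_ent(|diag;θ,π/4⟩) = binEnt (cos²(θ/2))`). -/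
noncomputable def binEnt (p : ℝ) : ℝ :=
  -(p * (Real.log p / Real.log 2)) - (1 - p) * (Real.log (1 - p) / Real.log 2)

/-! ### Auxiliary development -/

/-- Sign pattern `ε_{ij} (-1)^{s+t}`. -/
noncomputable def sgn (i j s t : Fin 2) : ℝ :=
  (![![1, 1], ![1, -1]] i j : ℝ) * (![![1, -1], ![-1, 1]] s t : ℝ)

/-- PR-box-like model with correlation `k`. -/
noncomputable def pr (k : ℝ) : Fin 2 → Fin 2 → Fin 2 → Fin 2 → ℝ := fun i j s t =>
  (1 + sgn i j s t * k) / 4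

lemma diag00 (θ φ : ℝ) : diagState θ φ (0,0) = ((Real.cos (θ/2) : ℝ) : ℂ) := by simp [diagState]
lemma diag01 (θ φ : ℝ) : diagState θ φ (0,1) = 0 := by simp [diagState]
lemma diag10 (θ φ : ℝ) : diagState θ φ (1,0) = 0 := by simp [diagState]
lemma diag11 (θ : ℝ) : diagState θ (Real.pi/4) (1,1)
    = (((Real.sqrt 2/2 : ℝ) : ℂ) + ((Real.sqrt 2/2 : ℝ) : ℂ) * Complex.I)
      * ((Real.sin (θ/2) : ℝ) : ℂ) := by
  have h : Complex.exp (((Real.pi/4 : ℝ) : ℂ) * Complex.I)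
      = (((Real.sqrt 2/2 : ℝ) : ℂ) + ((Real.sqrt 2/2 : ℝ) : ℂ) * Complex.I) := by
    rw [Complex.exp_mul_I, ← Complex.ofReal_cos, ← Complex.ofReal_sin,
      Real.cos_pi_div_four, Real.sin_pi_div_four]
  unfold diagState
  rw [if_neg (by decide), if_pos rfl, h]

/-- The Born model of the diagonal state is the PR-like box with `k = sin θ / √2`. -/
lemma born_eq (θ : ℝ) :
    born pauliMeas pauliMeas (diagState θ (Real.pi/4)) = pr (Real.sin θ / Real.sqrt 2) := by
  have h2 : Real.sqrt 2 ^ 2 = 2 := Real.sq_sqrt (by norm_num)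
  have h0 : Real.sqrt 2 ≠ 0 := by positivity
  have hinv : (Real.sqrt 2)⁻¹ = Real.sqrt 2 / 2 := by
    rw [eq_div_iff (by norm_num), inv_mul_eq_div, div_eq_iff h0]
    nlinarith [h2]
  have hpy : Real.sin (θ/2)^2 + Real.cos (θ/2)^2 = 1 := Real.sin_sq_add_cos_sq _
  have hs : Real.sin θ = 2 * Real.sin (θ/2) * Real.cos (θ/2) := by
    have := Real.sin_two_mul (θ/2)
    rw [show 2 * (θ/2) = θ by ring] at this
    exact this
  have hk : Real.sin θ / Real.sqrt 2 = Real.sqrt 2 * Real.sin (θ/2) * Real.cos (θ/2) := by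
    rw [hs, div_eq_iff h0]
    linear_combination (-(Real.sin (θ/2) * Real.cos (θ/2))) * h2
  have e2 : Real.sqrt 2 ^ 2 = 2 := h2
  have e3 : Real.sqrt 2 ^ 3 = 2 * Real.sqrt 2 := by rw [pow_succ, e2]
  have e4 : Real.sqrt 2 ^ 4 = 4 := by rw [show (4:ℕ) = 2*2 from rfl, pow_mul, e2]; norm_num
  have e5 : Real.sqrt 2 ^ 5 = 4 * Real.sqrt 2 := by rw [pow_succ, e4]
  have e6 : Real.sqrt 2 ^ 6 = 8 := by rw [pow_succ, e5]; linear_combination 4*h2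
  funext i j s t
  have hpy2 := hpy
  rw [hk]
  fin_cases i <;> fin_cases j <;> fin_cases s <;> fin_cases t <;>
  · simp only [born, ip4, tens, pauliMeas, Bx, By, pr, sgn, Fin.sum_univ_two,
      Fintype.sum_prod_type, Matrix.cons_val_zero, Matrix.cons_val_one, Matrix.head_cons,
      Fin.isValue, Fin.mk_one, Fin.mk_zero, Fin.zero_eta,
      diag00, diag01, diag10, diag11, ← Complex.ofReal_inv, hinv,
      Complex.sq_norm, Complex.normSq_apply,
      Complex.add_re, Complex.add_im, Complex.mul_re, Complex.mul_im,
      Complex.I_re, Complex.I_im, Complex.zero_re, Complex.zero_im,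
      Complex.ofReal_re, Complex.ofReal_im, Complex.neg_re, Complex.neg_im,
      map_mul, map_neg, Complex.conj_ofReal, Complex.conj_I,
      mul_zero, zero_mul, mul_one, one_mul,
      mul_neg, neg_mul, neg_neg, add_zero, zero_add, sub_zero, zero_sub]
    ring_nf
    ring_nf at hpy2
    simp only [e2, e3, e4, e5, e6]
    first
      | ring1
      | linear_combination hpy2 / 4
/-! ### Global assignment machinery -/

lemma fin2_cases (x : Fin 2) : x = 0 ∨ x = 1 := by
  fin_cases x
  · exact Or.inl rfl
  · exact Or.inr rfl

/-- CHSH value of a global assignment. -/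
noncomputable def Sg (g : Fin 2 ⊕ Fin 2 → Fin 2) : ℝ :=
  ∑ i, ∑ j, sgn i j (g (Sum.inl i)) (g (Sum.inr j))

lemma Sg_eq (g : Fin 2 ⊕ Fin 2 → Fin 2) : Sg g = 2 ∨ Sg g = -2 := by
  simp only [Sg, Fin.sum_univ_two]
  rcases fin2_cases (g (Sum.inl 0)) with h1|h1 <;> rcases fin2_cases (g (Sum.inl 1)) with h2|h2 <;>
    rcases fin2_cases (g (Sum.inr 0)) with h3|h3 <;>
    rcases fin2_cases (g (Sum.inr 1)) with h4|h4 <;>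
    rw [h1, h2, h3, h4] <;> norm_num [sgn]

lemma Sg_le (g : Fin 2 ⊕ Fin 2 → Fin 2) : Sg g ≤ 2 := by
  rcases Sg_eq g with h|h <;> rw [h] <;> norm_num

/-- Quadruples of outcomes are equivalent to global assignments. -/
noncomputable def quadEquiv : (Fin 2 × Fin 2 × Fin 2 × Fin 2) ≃ ((Fin 2 ⊕ Fin 2) → Fin 2) where
  toFun q := Sum.elim ![q.1, q.2.1] ![q.2.2.1, q.2.2.2]
  invFun g := (g (Sum.inl 0), g (Sum.inl 1), g (Sum.inr 0), g (Sum.inr 1))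
  left_inv := by rintro ⟨a,b,x,y⟩; simp
  right_inv := by
    intro g; funext z
    rcases z with z|z <;> fin_cases z <;> simp

lemma sum_g (F : ((Fin 2 ⊕ Fin 2) → Fin 2) → ℝ) :
    ∑ g, F g = ∑ a : Fin 2, ∑ b : Fin 2, ∑ x : Fin 2, ∑ y : Fin 2,
      F (Sum.elim ![a,b] ![x,y]) := by
  rw [← Equiv.sum_comp quadEquiv F]
  simp only [quadEquiv, Equiv.coe_fn_mk, Fintype.sum_prod_type]

lemma sum_ite_pair (a b : Fin 2) (x : ℝ) :
    (∑ s : Fin 2, ∑ t : Fin 2, if a = s ∧ b = t then x else 0) = x := by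
  fin_cases a <;> fin_cases b <;> simp [Fin.sum_univ_two]

/-! ### The PR-like box `pr k` -/

lemma isModel_pr (k : ℝ) (h0 : -1 ≤ k) (h1 : k ≤ 1) : IsModel (pr k) := by
  constructor
  · intro i j s t
    fin_cases i <;> fin_cases j <;> fin_cases s <;> fin_cases t <;>
      · simp only [pr, sgn, Matrix.cons_val_zero, Matrix.cons_val_one, Matrix.head_cons]
        norm_num
        linarith
  · intro i j
    fin_cases i <;> fin_cases j <;>
      · simp only [pr, sgn, Fin.sum_univ_two, Matrix.cons_val_zero, Matrix.cons_val_one,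
          Matrix.head_cons]
        ring

/-- The explicit global distribution witnessing noncontextuality of `pr k`. -/
noncomputable def dNC (k : ℝ) : ((Fin 2 ⊕ Fin 2) → Fin 2) → ℝ := fun g => (1 + k * Sg g) / 16

lemma noncontextual_pr (k : ℝ) (h0 : 0 ≤ k) (h1 : k ≤ 1/2) : Noncontextual (pr k) := by
  refine ⟨dNC k, ?_, ?_, ?_⟩
  · intro g
    unfold dNC
    rcases Sg_eq g with h|h <;> rw [h] <;> linarith
  · rw [sum_g (dNC k)]
    simp only [dNC, Sg, Fin.sum_univ_two, Sum.elim_inl, Sum.elim_inr,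
      Matrix.cons_val_zero, Matrix.cons_val_one, Matrix.head_cons, sgn]
    norm_num
    try ring1
  · intro i j s t
    rw [Finset.sum_filter, sum_g]
    fin_cases i <;> fin_cases j <;> fin_cases s <;> fin_cases t <;>
      · simp only [dNC, Sg, pr, sgn, Fin.sum_univ_two, Sum.elim_inl, Sum.elim_inr,
          Matrix.cons_val_zero, Matrix.cons_val_one, Matrix.head_cons, Fin.isValue]
        norm_num
        try ring1

/-! ### The CHSH functional -/

noncomputable def Bfun (e : Fin 2 → Fin 2 → Fin 2 → Fin 2 → ℝ) : ℝ :=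
  ∑ i, ∑ j, ∑ s, ∑ t, sgn i j s t * e i j s t

lemma Bfun_pr (k : ℝ) : Bfun (pr k) = 4 * k := by
  simp only [Bfun, pr, sgn, Fin.sum_univ_two, Matrix.cons_val_zero, Matrix.cons_val_one,
    Matrix.head_cons]
  ring

lemma sgn_le_one (i j s t : Fin 2) : sgn i j s t ≤ 1 := by
  fin_cases i <;> fin_cases j <;> fin_cases s <;> fin_cases t <;> norm_num [sgn]

lemma Bfun_le_of_model (e : Fin 2 → Fin 2 → Fin 2 → Fin 2 → ℝ) (he : IsModel e) :
    Bfun e ≤ 4 := by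
  have h1 : ∀ i j s t, sgn i j s t * e i j s t ≤ e i j s t := by
    intro i j s t
    have := sgn_le_one i j s t
    nlinarith [he.1 i j s t]
  calc Bfun e ≤ ∑ i, ∑ j, ∑ s, ∑ t, e i j s t := by
        unfold Bfun
        refine Finset.sum_le_sum fun i _ => Finset.sum_le_sum fun j _ =>
          Finset.sum_le_sum fun s _ => Finset.sum_le_sum fun t _ => h1 i j s t
    _ = 4 := by
        have h2 := he.2
        simp only [Fin.sum_univ_two] at h2 ⊢
        have h00 := h2 0 0; have h01 := h2 0 1; have h10 := h2 1 0; have h11 := h2 1 1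
        linarith

lemma Bfun_le_of_nc (e : Fin 2 → Fin 2 → Fin 2 → Fin 2 → ℝ) (hnc : Noncontextual e) :
    Bfun e ≤ 2 := by
  obtain ⟨d, hd0, hd1, hdm⟩ := hnc
  have key : Bfun e = ∑ g, Sg g * d g := by
    unfold Bfun
    have step : ∀ i j : Fin 2, (∑ s, ∑ t, sgn i j s t * e i j s t)
        = ∑ g, sgn i j (g (Sum.inl i)) (g (Sum.inr j)) * d g := by
      intro i j
      have h1 : ∀ s t : Fin 2, sgn i j s t * e i j s t
          = ∑ g, (if g (Sum.inl i) = s ∧ g (Sum.inr j) = t then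
              sgn i j (g (Sum.inl i)) (g (Sum.inr j)) * d g else 0) := by
        intro s t
        rw [← hdm i j s t, Finset.sum_filter, Finset.mul_sum]
        refine Finset.sum_congr rfl fun g _ => ?_
        by_cases hg : g (Sum.inl i) = s ∧ g (Sum.inr j) = t
        · rw [if_pos hg, if_pos hg, hg.1, hg.2]
        · rw [if_neg hg, if_neg hg, mul_zero]
      calc (∑ s, ∑ t, sgn i j s t * e i j s t)
          = ∑ s : Fin 2, ∑ t : Fin 2, ∑ g, (if g (Sum.inl i) = s ∧ g (Sum.inr j) = t then
              sgn i j (g (Sum.inl i)) (g (Sum.inr j)) * d g else 0) := by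
            exact Finset.sum_congr rfl fun s _ => Finset.sum_congr rfl fun t _ => h1 s t
        _ = ∑ s : Fin 2, ∑ g, ∑ t : Fin 2, (if g (Sum.inl i) = s ∧ g (Sum.inr j) = t then
              sgn i j (g (Sum.inl i)) (g (Sum.inr j)) * d g else 0) :=
            Finset.sum_congr rfl fun s _ => Finset.sum_comm
        _ = ∑ g, ∑ s : Fin 2, ∑ t : Fin 2, (if g (Sum.inl i) = s ∧ g (Sum.inr j) = t then
              sgn i j (g (Sum.inl i)) (g (Sum.inr j)) * d g else 0) :=
            Finset.sum_comm
        _ = ∑ g, sgn i j (g (Sum.inl i)) (g (Sum.inr j)) * d g := by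
            exact Finset.sum_congr rfl fun g _ => sum_ite_pair _ _ _
    calc (∑ i, ∑ j, ∑ s, ∑ t, sgn i j s t * e i j s t)
        = ∑ i, ∑ j, ∑ g, sgn i j (g (Sum.inl i)) (g (Sum.inr j)) * d g := by
          exact Finset.sum_congr rfl fun i _ => Finset.sum_congr rfl fun j _ => step i j
      _ = ∑ i, ∑ g, ∑ j, sgn i j (g (Sum.inl i)) (g (Sum.inr j)) * d g :=
          Finset.sum_congr rfl fun i _ => Finset.sum_comm
      _ = ∑ g, ∑ i, ∑ j, sgn i j (g (Sum.inl i)) (g (Sum.inr j)) * d g :=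
          Finset.sum_comm
      _ = ∑ g, Sg g * d g := by
          refine Finset.sum_congr rfl fun g _ => ?_
          rw [Sg, Finset.sum_mul]
          exact Finset.sum_congr rfl fun i _ => (Finset.sum_mul _ _ _).symm
  rw [key]
  calc (∑ g, Sg g * d g) ≤ ∑ g, 2 * d g :=
        Finset.sum_le_sum fun g _ => mul_le_mul_of_nonneg_right (Sg_le g) (hd0 g)
    _ = 2 := by rw [← Finset.mul_sum, hd1, mul_one]

/-! ### Bounds on the noncontextual fraction of `pr k` -/

lemma NCF_pr_ge (k : ℝ) (h0 : 0 ≤ k) (h1 : k ≤ 1) : min 1 (2 - 2*k) ≤ NCF (pr k) := by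
  apply le_csSup
  · exact ⟨1, by rintro l ⟨-, hl1, -⟩; exact hl1⟩
  · rcases le_or_gt k (1/2) with hk|hk
    · rw [min_eq_left (by linarith)]
      exact ⟨zero_le_one, le_refl 1, pr k, pr k, isModel_pr _ (by linarith) h1,
        noncontextual_pr _ h0 hk, isModel_pr _ (by linarith) h1,
        fun i j s t => by ring⟩
    · rw [min_eq_right (by linarith)]
      exact ⟨by linarith, by linarith, pr (1/2), pr 1,
        isModel_pr _ (by norm_num) (by norm_num), noncontextual_pr _ (by norm_num) (by norm_num),
        isModel_pr _ (by norm_num) (by norm_num),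
        fun i j s t => by simp only [pr]; ring⟩

lemma NCF_pr_le (k : ℝ) (h0 : 0 ≤ k) (h1 : k ≤ 1) : NCF (pr k) ≤ min 1 (2 - 2*k) := by
  apply csSup_le
  · exact ⟨0, le_refl 0, zero_le_one, pr 0, pr k, isModel_pr _ (by norm_num) (by norm_num),
      noncontextual_pr _ (by norm_num) (by norm_num), isModel_pr _ (by linarith) h1,
      fun i j s t => by ring⟩
  · rintro l ⟨hl0, hl1, eNC, e', hm1, hnc, hm2, hdec⟩
    refine le_min hl1 ?_
    have hB : Bfun (pr k) = l * Bfun eNC + (1 - l) * Bfun e' := by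
      simp only [Bfun, Fin.sum_univ_two, hdec]
      ring
    rw [Bfun_pr] at hB
    have b1 : Bfun eNC ≤ 2 := Bfun_le_of_nc _ hnc
    have b2 : Bfun e' ≤ 4 := Bfun_le_of_model _ hm2
    nlinarith [mul_le_mul_of_nonneg_left b1 hl0,
      mul_le_mul_of_nonneg_left b2 (by linarith : (0:ℝ) ≤ 1 - l)]

/-! ### Entropy comparison -/

lemma binEnt_eq (p : ℝ) : binEnt p = Real.binEntropy p / Real.log 2 := by
  unfold binEnt Real.binEntropy
  rw [Real.log_inv, Real.log_inv]
  ring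

lemma sin_le_of_binEnt {θ₁ θ₂ : ℝ} (h₁ : θ₁ ∈ Set.Icc 0 Real.pi) (h₂ : θ₂ ∈ Set.Icc 0 Real.pi)
    (h : binEnt (Real.cos (θ₁ / 2) ^ 2) > binEnt (Real.cos (θ₂ / 2) ^ 2)) :
    Real.sin θ₂ ≤ Real.sin θ₁ := by
  by_contra hlt
  push_neg at hlt
  set p₁ := Real.cos (θ₁ / 2) ^ 2 with hp₁
  set p₂ := Real.cos (θ₂ / 2) ^ 2 with hp₂
  have hpy₁ : Real.sin (θ₁/2)^2 + Real.cos (θ₁/2)^2 = 1 := Real.sin_sq_add_cos_sq _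
  have hpy₂ : Real.sin (θ₂/2)^2 + Real.cos (θ₂/2)^2 = 1 := Real.sin_sq_add_cos_sq _
  have hs₁ : Real.sin θ₁ = 2 * Real.sin (θ₁/2) * Real.cos (θ₁/2) := by
    have := Real.sin_two_mul (θ₁/2); rw [show 2 * (θ₁/2) = θ₁ by ring] at this; exact this
  have hs₂ : Real.sin θ₂ = 2 * Real.sin (θ₂/2) * Real.cos (θ₂/2) := by
    have := Real.sin_two_mul (θ₂/2); rw [show 2 * (θ₂/2) = θ₂ by ring] at this; exact this
  have hp₁0 : 0 ≤ p₁ := sq_nonneg _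
  have hp₂0 : 0 ≤ p₂ := sq_nonneg _
  have hp₁1 : p₁ ≤ 1 := by nlinarith [sq_nonneg (Real.sin (θ₁/2))]
  have hp₂1 : p₂ ≤ 1 := by nlinarith [sq_nonneg (Real.sin (θ₂/2))]
  have hsin₁ : 0 ≤ Real.sin θ₁ := Real.sin_nonneg_of_nonneg_of_le_pi h₁.1 h₁.2
  have hprod₁ : p₁ * (1 - p₁) = Real.sin θ₁ ^ 2 / 4 := by
    rw [hs₁]; nlinarith [hpy₁]
  have hprod₂ : p₂ * (1 - p₂) = Real.sin θ₂ ^ 2 / 4 := by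
    rw [hs₂]; nlinarith [hpy₂]
  have hpp : p₁ * (1 - p₁) < p₂ * (1 - p₂) := by
    rw [hprod₁, hprod₂]
    nlinarith
  have binEnt_aux : ∀ p : ℝ, 0 ≤ p → p ≤ 1 → ∃ q : ℝ, 0 ≤ q ∧ q ≤ 2⁻¹ ∧
      Real.binEntropy q = Real.binEntropy p ∧ q * (1-q) = p * (1-p) := by
    intro p h0 h1
    rcases le_total p (1-p) with hc|hc
    · exact ⟨p, h0, by linarith, rfl, rfl⟩
    · exact ⟨1-p, by linarith, by linarith, Real.binEntropy_one_sub p, by ring⟩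
  obtain ⟨q₁, hq₁0, hq₁h, hBq₁, hqprod₁⟩ := binEnt_aux p₁ hp₁0 hp₁1
  obtain ⟨q₂, hq₂0, hq₂h, hBq₂, hqprod₂⟩ := binEnt_aux p₂ hp₂0 hp₂1
  have hqlt : q₁ < q₂ := by
    by_contra hq
    push_neg at hq
    nlinarith [hqprod₁, hqprod₂, hpp]
  have hmono := Real.binEntropy_strictMonoOn (Set.mem_Icc.mpr ⟨hq₁0, hq₁h⟩)
    (Set.mem_Icc.mpr ⟨hq₂0, hq₂h⟩) hqlt
  rw [hBq₁, hBq₂] at hmono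
  have hlog : 0 < Real.log 2 := Real.log_pos one_lt_two
  have : binEnt p₁ < binEnt p₂ := by
    rw [binEnt_eq, binEnt_eq]
    exact (div_lt_div_iff_of_pos_right hlog).mpr hmono
  linarith

/-- the contextual fraction of `|diag;θ,π/4⟩` with respect to the
scenario `S(B_x, B_y)` grows monotonically with the entanglement entropy. -/
theorem contextual_fraction_monotone_in_entropy
    (θ₁ θ₂ : ℝ) (h₁ : θ₁ ∈ Set.Icc 0 Real.pi) (h₂ : θ₂ ∈ Set.Icc 0 Real.pi)
    (h : binEnt (Real.cos (θ₁ / 2) ^ 2) > binEnt (Real.cos (θ₂ / 2) ^ 2)) :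
    CF (born pauliMeas pauliMeas (diagState θ₁ (Real.pi / 4)))
      ≥ CF (born pauliMeas pauliMeas (diagState θ₂ (Real.pi / 4))) := by
  have hsin := sin_le_of_binEnt h₁ h₂ h
  have hsin₁ : 0 ≤ Real.sin θ₁ := Real.sin_nonneg_of_nonneg_of_le_pi h₁.1 h₁.2
  have hsin₂ : 0 ≤ Real.sin θ₂ := Real.sin_nonneg_of_nonneg_of_le_pi h₂.1 h₂.2
  have hs2pos : (0:ℝ) < Real.sqrt 2 := by positivity
  have hs2ge1 : (1:ℝ) ≤ Real.sqrt 2 := by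
    nlinarith [Real.sq_sqrt (by norm_num : (0:ℝ) ≤ 2), Real.sqrt_nonneg 2]
  set k₁ := Real.sin θ₁ / Real.sqrt 2 with hk₁
  set k₂ := Real.sin θ₂ / Real.sqrt 2 with hk₂
  have hk₁0 : 0 ≤ k₁ := by positivity
  have hk₂0 : 0 ≤ k₂ := by positivity
  have hk₁1 : k₁ ≤ 1 := by
    rw [hk₁, div_le_one hs2pos]; linarith [Real.sin_le_one θ₁]
  have hk₂1 : k₂ ≤ 1 := by
    rw [hk₂, div_le_one hs2pos]; linarith [Real.sin_le_one θ₂]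
  have hkle : k₂ ≤ k₁ := by
    rw [hk₁, hk₂]
    exact div_le_div_of_nonneg_right hsin hs2pos.le
  rw [show Real.pi / 4 = Real.pi/4 from rfl, born_eq θ₁, born_eq θ₂]
  unfold CF
  have A := NCF_pr_le k₁ hk₁0 hk₁1
  have B := NCF_pr_ge k₂ hk₂0 hk₂1
  have C : min 1 (2 - 2*k₁) ≤ min 1 (2 - 2*k₂) := min_le_min (le_refl 1) (by linarith)
  linarith
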